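/- Suppose (A₁, ..., A_k, B) are n×n matrices over a field F of characteristic zero satisfying rank(A₁^m) + ... + rank(A_k^m) = rank(B^m) for all m ≥ 1, with stable ranks rank(A_j^n) = q_j and q = q₁ + ... + q_k ≤ n. Then rank(B^n) = q, so B is similar to C ⊕ D where D ∈ GL(q, F) and C is a nilpotent (n−q)×(n−q) matrix; moreover the nonzero Jordan blocks of C coincide (up to conjugation) with the union of all nonzero nilpotent Jordan blocks of A₁, ..., A_k. -/

import Mathlib

open Matrix LinearMap Module

section helpers
variable {F : Type*} [Field F] {n : ℕ}

lemma toLin'_pow' (X : Matrix (Fin n) (Fin n) F) (m : ℕ) :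
    Matrix.toLin' (X ^ m) = (Matrix.toLin' X) ^ m :=
  map_pow Matrix.toLinAlgEquiv' X m

lemma rank_eq_range' (X : Matrix (Fin n) (Fin n) F) :
    X.rank = finrank F (LinearMap.range (Matrix.toLin' X)) := by
  rw [Matrix.rank_eq_finrank_range_toLin X (Pi.basisFun F (Fin n)) (Pi.basisFun F (Fin n)),
    Matrix.toLin_eq_toLin']

lemma ker_toLin'_pow_stab (X : Matrix (Fin n) (Fin n) F) {m : ℕ} (hm : n ≤ m) :
    LinearMap.ker ((Matrix.toLin' X) ^ m) = LinearMap.ker ((Matrix.toLin' X) ^ n) := by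
  have hfr : finrank F (Fin n → F) = n := by simp
  rw [Module.End.ker_pow_eq_ker_pow_finrank_of_le (hfr.le.trans hm),
    Module.End.ker_pow_eq_ker_pow_finrank_of_le hfr.le]

lemma rank_pow_stab (X : Matrix (Fin n) (Fin n) F) {m : ℕ} (hm : n ≤ m) :
    (X ^ m).rank = (X ^ n).rank := by
  have h1 := LinearMap.finrank_range_add_finrank_ker ((Matrix.toLin' X) ^ m)
  have h2 := LinearMap.finrank_range_add_finrank_ker ((Matrix.toLin' X) ^ n)
  rw [ker_toLin'_pow_stab X hm] at h1
  rw [rank_eq_range', rank_eq_range', toLin'_pow', toLin'_pow']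
  omega

lemma rank_pow_anti (X : Matrix (Fin n) (Fin n) F) {a b : ℕ} (h : a ≤ b) :
    (X ^ b).rank ≤ (X ^ a).rank := by
  rw [← Nat.add_sub_cancel' h, pow_add]
  exact Matrix.rank_mul_le_left _ _

end helpers

set_option maxHeartbeats 1000000 in
set_option synthInstance.maxHeartbeats 400000 in
theorem rank_equation_nonnilpotent_structure
    {F : Type*} [Field F] [CharZero F] {n k : ℕ} (hn : 1 ≤ n) (hk : 1 ≤ k)
    (A : Fin k → Matrix (Fin n) (Fin n) F) (B : Matrix (Fin n) (Fin n) F)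
    (hsol : ∀ m : ℕ, 1 ≤ m → (∑ j : Fin k, ((A j) ^ m).rank) = (B ^ m).rank)
    (q : Fin k → ℕ) (hq : ∀ j, ((A j) ^ n).rank = q j)
    (hqn : (∑ j : Fin k, q j) ≤ n) :
    (B ^ n).rank = (∑ j : Fin k, q j) ∧
    ∃ (C : Matrix (Fin (n - ∑ j : Fin k, q j)) (Fin (n - ∑ j : Fin k, q j)) F)
      (D : Matrix (Fin (∑ j : Fin k, q j)) (Fin (∑ j : Fin k, q j)) F)
      (e : (Fin (n - ∑ j : Fin k, q j) ⊕ Fin (∑ j : Fin k, q j)) ≃ Fin n)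
      (U : (Matrix (Fin n) (Fin n) F)ˣ),
      IsNilpotent C ∧ IsUnit D ∧
      B = (U⁻¹ : (Matrix (Fin n) (Fin n) F)ˣ) *
            (Matrix.reindex e e (Matrix.fromBlocks C 0 0 D)) *
            (U : Matrix (Fin n) (Fin n) F) ∧
      -- the nonzero nilpotent Jordan blocks of `C` coincide, up to conjugation, with the
      -- union of the nonzero nilpotent Jordan blocks of the `A j`, i.e. the rank
      -- functions of the nilpotent parts agree:
      (∀ m : ℕ, 1 ≤ m → (C ^ m).rank = ∑ j : Fin k, (((A j) ^ m).rank - q j)) := by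
  classical
  set s := ∑ j : Fin k, q j with hs
  have hq' : ∀ j, ∀ m, n ≤ m → ((A j) ^ m).rank = q j := fun j m hm => by
    rw [rank_pow_stab _ hm, hq]
  have hBstab : ∀ m, n ≤ m → (B ^ m).rank = s := fun m hm => by
    rw [← hsol m (hn.trans hm), hs]
    exact Finset.sum_congr rfl fun j _ => hq' j m hm
  have h1 : (B ^ n).rank = s := hBstab n le_rfl
  refine ⟨h1, ?_⟩
  set f := Matrix.toLin' B with hf
  obtain ⟨N, hN⟩ := Filter.eventually_atTop.mp (f.eventually_isCompl_ker_pow_range_pow)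
  set M := max N n with hM
  have hMn : n ≤ M := le_max_right _ _
  have hM1 : 1 ≤ M := hn.trans hMn
  set p := LinearMap.ker (f ^ M) with hp
  set p' := LinearMap.range (f ^ M) with hp'
  have hcompl : IsCompl p p' := hN M (le_max_left _ _)
  have hdisj : Disjoint p p' := hcompl.disjoint
  have hfr : finrank F (Fin n → F) = n := by simp
  -- dimensions
  have hdim' : finrank F p' = s := by
    have h2 : (B ^ M).rank = finrank F p' := by
      rw [rank_eq_range', toLin'_pow', hp', hf]
    rw [← h2, hBstab M hMn]
  have hrn : finrank F p + finrank F p' = n := by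
    have := LinearMap.finrank_range_add_finrank_ker (f ^ M)
    rw [hfr, ← hp, ← hp'] at this; omega
  have hdim : finrank F p = n - s := by omega
  -- ker of powers is inside p
  have hkerm : ∀ m, 1 ≤ m → LinearMap.ker (f ^ m) ≤ p := by
    intro m hm
    rcases le_total m M with h | h
    · intro x hx
      rw [LinearMap.mem_ker] at hx ⊢
      have : f ^ M = f ^ (M - m) * f ^ m := by rw [← pow_add, Nat.sub_add_cancel h]
      rw [this, Module.End.mul_apply, hx, map_zero]
    · have e1 : LinearMap.ker (f ^ m) = LinearMap.ker (f ^ n) := ker_toLin'_pow_stab B (hMn.trans h)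
      have e2 : LinearMap.ker (f ^ M) = LinearMap.ker (f ^ n) := ker_toLin'_pow_stab B hMn
      rw [e1, hp, e2]
  -- invariance of p and p' under powers of f
  have hfpm : ∀ m, ∀ x ∈ p, (f ^ m) x ∈ p := by
    intro m x hx
    rw [hp, LinearMap.mem_ker] at hx ⊢
    rw [← Module.End.mul_apply, ← pow_add, add_comm, pow_add, Module.End.mul_apply, hx, map_zero]
  have hfpm' : ∀ m, ∀ x ∈ p', (f ^ m) x ∈ p' := by
    intro m x hx
    obtain ⟨y, rfl⟩ := hx
    exact ⟨(f ^ m) y, by rw [← Module.End.mul_apply, ← Module.End.mul_apply, ← pow_add, add_comm, pow_add]⟩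
  have hfp : ∀ x ∈ p, f x ∈ p := by
    intro x hx; simpa [pow_one] using hfpm 1 x hx
  have hfp' : ∀ x ∈ p', f x ∈ p' := by
    intro x hx; simpa [pow_one] using hfpm' 1 x hx
  -- bases
  let b1 : Basis (Fin (n - s)) F p := Module.finBasisOfFinrankEq F p hdim
  let b2 : Basis (Fin s) F p' := Module.finBasisOfFinrankEq F p' hdim'
  let g1 : p →ₗ[F] p := f.restrict hfp
  let g2 : p' →ₗ[F] p' := f.restrict hfp'
  let C : Matrix (Fin (n - s)) (Fin (n - s)) F := LinearMap.toMatrix b1 b1 g1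
  let D : Matrix (Fin s) (Fin s) F := LinearMap.toMatrix b2 b2 g2
  have hCm : ∀ m, C ^ m = LinearMap.toMatrix b1 b1 (g1 ^ m) := fun m =>
    (map_pow (LinearMap.toMatrixAlgEquiv b1) g1 m).symm
  have hDm : ∀ m, D ^ m = LinearMap.toMatrix b2 b2 (g2 ^ m) := fun m =>
    (map_pow (LinearMap.toMatrixAlgEquiv b2) g2 m).symm
  -- C nilpotent
  have hCnil : IsNilpotent C := by
    refine ⟨M, ?_⟩
    rw [hCm, Module.End.pow_restrict]
    have : (f ^ M).restrict (Module.End.pow_apply_mem_of_forall_mem M hfp) = 0 := by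
      ext x
      have hx : (f ^ M) (x : Fin n → F) = 0 := x.2
      simp [LinearMap.restrict_apply, hx]
    rw [this]
    exact (LinearMap.toMatrix b1 b1).map_zero
  -- D is a unit
  have hg2inj : LinearMap.ker g2 = ⊥ := by
    rw [eq_bot_iff]
    rintro x hx
    rw [LinearMap.mem_ker] at hx
    have hfx : f (x : Fin n → F) = 0 := by
      have := congrArg (Subtype.val) hx
      rwa [LinearMap.restrict_coe_apply] at this
    have hmem : (x : Fin n → F) ∈ p ⊓ p' := by
      refine ⟨hkerm 1 le_rfl ?_, x.2⟩
      rw [LinearMap.mem_ker, pow_one]; exact hfx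
    have : (x : Fin n → F) = 0 := by
      have := hdisj.le_bot hmem; simpa using this
    simpa [Submodule.mem_bot] using Subtype.ext this
  have hg2bij : Function.Bijective g2 := by
    have hinj : Function.Injective g2 := LinearMap.ker_eq_bot.mp hg2inj
    exact ⟨hinj, (LinearMap.injective_iff_surjective).mp hinj⟩
  have hDunit : IsUnit D := ((Module.End.isUnit_iff g2).mpr hg2bij).map
    (LinearMap.toMatrixAlgEquiv b2)
  -- the similarity
  let eqv : (p × p') ≃ₗ[F] (Fin n → F) := Submodule.prodEquivOfIsCompl p p' hcompl
  let bp : Basis (Fin (n - s) ⊕ Fin s) F (p × p') := b1.prod b2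
  have hconj : ∀ z : p × p', f (eqv z) = eqv ((g1.prodMap g2) z) := by
    rintro ⟨x, y⟩
    rw [Submodule.coe_prodEquivOfIsCompl', Submodule.coe_prodEquivOfIsCompl']
    simp only [LinearMap.prodMap_apply, LinearMap.restrict_coe_apply, map_add]
    rfl
  have hblock : LinearMap.toMatrix bp bp (g1.prodMap g2) = Matrix.fromBlocks C 0 0 D :=
    LinearMap.toMatrix_prodMap b1 b2 g1 g2
  let bm : Basis (Fin (n - s) ⊕ Fin s) F (Fin n → F) := bp.map eqv
  have hmap : LinearMap.toMatrix bm bm f = LinearMap.toMatrix bp bp (g1.prodMap g2) := by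
    ext i j
    rw [LinearMap.toMatrix_apply, LinearMap.toMatrix_apply]
    show bm.repr (f (eqv (bp j))) i = _
    rw [hconj]
    show bp.repr (eqv.symm (eqv _)) i = _
    rw [LinearEquiv.symm_apply_apply]
  have hsum : (n - s) + s = n := Nat.sub_add_cancel hqn
  let e : (Fin (n - s) ⊕ Fin s) ≃ Fin n := finSumFinEquiv.trans (finCongr hsum)
  let bfin : Basis (Fin n) F (Fin n → F) := bm.reindex e
  have hreindex : LinearMap.toMatrix bfin bfin f
      = Matrix.reindex e e (LinearMap.toMatrix bm bm f) := by
    ext i j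
    rw [LinearMap.toMatrix_apply, Matrix.reindex_apply, Matrix.submatrix_apply,
      LinearMap.toMatrix_apply]
    show (bm.reindex e).repr (f (bm.reindex e j)) i = _
    rw [Basis.repr_reindex, Module.Basis.reindex_apply, Finsupp.mapDomain_equiv_apply]
  let std : Basis (Fin n) F (Fin n → F) := Pi.basisFun F (Fin n)
  have key : std.toMatrix bfin * LinearMap.toMatrix bfin bfin f * bfin.toMatrix std = B := by
    rw [basis_toMatrix_mul_linearMap_toMatrix_mul_basis_toMatrix]
    show LinearMap.toMatrix (Pi.basisFun F (Fin n)) (Pi.basisFun F (Fin n)) f = B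
    rw [LinearMap.toMatrix_eq_toMatrix']
    exact LinearMap.toMatrix'_toLin' B
  let U : (Matrix (Fin n) (Fin n) F)ˣ :=
    ⟨bfin.toMatrix std, std.toMatrix bfin,
      Basis.toMatrix_mul_toMatrix_flip _ _, Basis.toMatrix_mul_toMatrix_flip _ _⟩
  have hB : B = (U⁻¹ : (Matrix (Fin n) (Fin n) F)ˣ) *
      (Matrix.reindex e e (Matrix.fromBlocks C 0 0 D)) * (U : Matrix (Fin n) (Fin n) F) := by
    show B = std.toMatrix bfin * (Matrix.reindex e e (Matrix.fromBlocks C 0 0 D)) *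
      bfin.toMatrix std
    rw [← hblock, ← hmap, ← hreindex, key]
  refine ⟨C, D, e, U, hCnil, hDunit, hB, ?_⟩
  -- rank identity
  intro m hm
  -- pointwise inequality q j ≤ rank (A j ^ m)
  have hqle : ∀ j ∈ Finset.univ, q j ≤ ((A j) ^ m).rank := by
    intro j _
    rcases le_total m n with h | h
    · rw [← hq j]; exact rank_pow_anti (A j) h
    · rw [hq' j m h]
  rw [Finset.sum_tsub_distrib _ hqle, hsol m hm, ← hs]
  -- it suffices to show (C^m).rank + s = (B^m).rank
  suffices hsuf : (C ^ m).rank + s = (B ^ m).rank by omega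
  -- rank of C^m equals finrank of map (f^m) p
  have hmaple : Submodule.map (f ^ m) p ≤ p := by
    rintro _ ⟨x, hx, rfl⟩; exact hfpm m x hx
  have hmaple' : Submodule.map (f ^ m) p' ≤ p' := by
    rintro _ ⟨x, hx, rfl⟩; exact hfpm' m x hx
  have hC : (C ^ m).rank = finrank F (Submodule.map (f ^ m) p) := by
    rw [hCm, Matrix.rank_eq_finrank_range_toLin _ b1 b1, Matrix.toLin_toMatrix]
    show finrank F (LinearMap.range (g1 ^ m)) = _
    rw [show g1 ^ m = (f ^ m).restrict (Module.End.pow_apply_mem_of_forall_mem m hfp) from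
      Module.End.pow_restrict m hfp]
    have hrange : LinearMap.range ((f ^ m).restrict
        (Module.End.pow_apply_mem_of_forall_mem m hfp))
        = Submodule.comap p.subtype (Submodule.map (f ^ m) p) := by
      rw [LinearMap.restrict, LinearMap.range_codRestrict, LinearMap.range_domRestrict]
    rw [hrange]
    exact (Submodule.comapSubtypeEquivOfLe hmaple).finrank_eq
  -- finrank of map (f^m) p' equals s
  have hmap' : finrank F (Submodule.map (f ^ m) p') = s := by
    have hker : LinearMap.ker ((f ^ m).domRestrict p') = ⊥ := by
      rw [eq_bot_iff]
      rintro x hx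
      rw [LinearMap.mem_ker, LinearMap.domRestrict_apply] at hx
      have hmem : (x : Fin n → F) ∈ p ⊓ p' := ⟨hkerm m hm hx, x.2⟩
      have : (x : Fin n → F) = 0 := by
        have := hdisj.le_bot hmem; simpa using this
      simpa [Submodule.mem_bot] using Subtype.ext this
    have h5 := LinearMap.finrank_range_add_finrank_ker ((f ^ m).domRestrict p')
    rw [LinearMap.range_domRestrict, hker] at h5
    simp only [finrank_bot, add_zero] at h5
    rw [h5, hdim']
  -- rank of B^m decomposes
  have hdisjm : Disjoint (Submodule.map (f ^ m) p) (Submodule.map (f ^ m) p') :=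
    hdisj.mono hmaple hmaple'
  have hBrank : (B ^ m).rank = finrank F (Submodule.map (f ^ m) p)
      + finrank F (Submodule.map (f ^ m) p') := by
    rw [rank_eq_range', toLin'_pow', ← hf, LinearMap.range_eq_map,
      ← hcompl.codisjoint.eq_top, Submodule.map_sup]
    have := Submodule.finrank_sup_add_finrank_inf_eq
      (Submodule.map (f ^ m) p) (Submodule.map (f ^ m) p')
    rw [hdisjm.eq_bot] at this
    simp only [finrank_bot, add_zero] at this
    exact this
  rw [hC, hBrank, hmap']
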